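/- Let A = (a_{ji}) be a J×I matrix with nonnegative real entries such that every column sum satisfies Σ_j a_{ji} ≤ 1. Let q ∈ ℝ^I_{≥0} with A_j q > 0 for every row A_j, and let δ ∈ ℝ^I_{>0}. Define δ'_i = δ_i · Π_{j=1}^J (A_j q / A_j δ)^{a_{ji}}. Then Σ_i δ'_i ≤ Σ_i δ_i + Σ_{j=1}^J (A_j q − A_j δ). -/
import Mathlib


open Finset Real

/-- Weighted AM-GM with weight sum at most 1. -/
lemma amgm_le_one {n : ℕ} (w z : Fin n → ℝ) (hw : ∀ i, 0 ≤ w i)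
    (hs : (∑ i, w i) ≤ 1) (hz : ∀ i, 0 ≤ z i) :
    (∏ i, z i ^ w i) ≤ (∑ i, w i * z i) + (1 - ∑ i, w i) := by
  have key := Real.geom_mean_le_arith_mean_weighted (Finset.univ : Finset (Option (Fin n)))
    (fun o => o.elim (1 - ∑ i, w i) w) (fun o => o.elim 1 z)
    (by
      intro o _
      cases o with
      | none => simpa using sub_nonneg.2 hs
      | some i => exact hw i)
    (by simp [Fintype.sum_option])
    (by
      intro o _
      cases o with
      | none => norm_num
      | some i => exact hz i)
  rw [Fintype.prod_option, Fintype.sum_option] at key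
  simp only [Option.elim] at key
  rw [Real.one_rpow, one_mul] at key
  linarith [key]

/-- One GIS update step: the total mass increases by at most `Σⱼ (Aⱼq − Aⱼδ)`,
for a nonnegative matrix with column sums at most 1. -/
theorem gis_step_sum_le (J I : ℕ) (A : Fin J → Fin I → ℝ)
    (hA : ∀ j i, 0 ≤ A j i) (hcol : ∀ i, (∑ j, A j i) ≤ 1)
    (q : Fin I → ℝ) (hq : ∀ i, 0 ≤ q i)
    (hAq : ∀ j, 0 < ∑ i, A j i * q i)
    (δ : Fin I → ℝ) (hδ : ∀ i, 0 < δ i)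
    (δ' : Fin I → ℝ)
    (hδ' : ∀ i, δ' i =
      δ i * ∏ j, ((∑ i', A j i' * q i') / (∑ i', A j i' * δ i')) ^ (A j i)) :
    (∑ i, δ' i) ≤ (∑ i, δ i) + ∑ j, ((∑ i, A j i * q i) - (∑ i, A j i * δ i)) := by
  set r : Fin J → ℝ := fun j => (∑ i', A j i' * q i') / (∑ i', A j i' * δ i') with hr
  have hAδ : ∀ j, 0 < ∑ i', A j i' * δ i' := by
    intro j
    rcases (sum_nonneg fun i _ => mul_nonneg (hA j i) (hδ i).le).lt_or_eq with h | h
    · exact h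
    · exfalso
      have hz : ∀ i ∈ Finset.univ, A j i * δ i = 0 :=
        (Finset.sum_eq_zero_iff_of_nonneg
          (fun i _ => mul_nonneg (hA j i) (hδ i).le)).1 h.symm
      have hA0 : ∀ i, A j i = 0 := fun i => by
        have := hz i (Finset.mem_univ i)
        rcases mul_eq_zero.1 this with h' | h'
        · exact h'
        · exact absurd h' (hδ i).ne'
      have : (∑ i, A j i * q i) = 0 := Finset.sum_eq_zero fun i _ => by simp [hA0 i]
      exact (hAq j).ne' this
  have hrpos : ∀ j, 0 ≤ r j := fun j => div_nonneg (hAq j).le (hAδ j).le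
  have step : ∀ i, δ' i ≤ δ i * ((∑ j, A j i * r j) + (1 - ∑ j, A j i)) := by
    intro i
    rw [hδ' i]
    exact mul_le_mul_of_nonneg_left
      (amgm_le_one (fun j => A j i) r (fun j => hA j i) (hcol i) hrpos) (hδ i).le
  calc (∑ i, δ' i) ≤ ∑ i, δ i * ((∑ j, A j i * r j) + (1 - ∑ j, A j i)) :=
        Finset.sum_le_sum fun i _ => step i
    _ = (∑ i, δ i) + ∑ j, ((r j - 1) * ∑ i, A j i * δ i) := by
        have hpt : ∀ i, δ i * ((∑ j, A j i * r j) + (1 - ∑ j, A j i)) =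
            δ i + ∑ j, (r j - 1) * (A j i * δ i) := by
          intro i
          have h1 : (∑ j, (r j - 1) * (A j i * δ i)) =
              (∑ j, δ i * (A j i * r j)) - ∑ j, δ i * A j i := by
            rw [← Finset.sum_sub_distrib]
            exact Finset.sum_congr rfl fun j _ => by ring
          rw [h1, ← Finset.mul_sum, ← Finset.mul_sum]
          ring
        rw [Finset.sum_congr rfl fun i _ => hpt i, Finset.sum_add_distrib]
        congr 1
        rw [Finset.sum_comm]
        exact Finset.sum_congr rfl fun j _ => by rw [Finset.mul_sum]
    _ = (∑ i, δ i) + ∑ j, ((∑ i, A j i * q i) - (∑ i, A j i * δ i)) := by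
        congr 1
        refine Finset.sum_congr rfl fun j _ => ?_
        rw [sub_mul, one_mul, hr]
        rw [div_mul_cancel₀ _ (hAδ j).ne']
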